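/- If 0 < a_0 and a_{k-1} < n−1 (internal simplex), then for any vertex index m, the semiring DN¹_m is commutative and every element α of DN¹_m satisfies α² = ā_m (the constant map with value a_m); in particular every element is a_m-nilpotent. -/
import Mathlib


/-- The discrete neighborhood `DN¹` of a vertex `a`: the constant map `ā` together with all
monotone maps with range in `A` taking the value `a` exactly `n-1` times. -/
def DN1 (n : ℕ) (A : Set (Fin n)) (a : Fin n) : Set (Fin n → Fin n) :=
  {γ | Monotone γ ∧ Set.range γ ⊆ A ∧
    ((∀ i, γ i = a) ∨ (Finset.univ.filter fun i => γ i = a).card = n - 1)}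

lemma dn1_key (n : ℕ) (A : Set (Fin n)) (am : Fin n)
    (hA : ∀ x ∈ A, 0 < (x : ℕ) ∧ (x : ℕ) < n - 1)
    {β : Fin n → Fin n} (hβ : β ∈ DN1 n A am) {x : Fin n} (hx : x ∈ A) :
    β x = am := by
  obtain ⟨hmono, hrange, hconst | hcard⟩ := hβ
  · exact hconst x
  by_contra hne
  obtain ⟨hx0, hxn⟩ := hA x hx
  have hn : 3 ≤ n := by omega
  have h1 : (Finset.univ.filter fun i => ¬ (β i = am)).card = 1 := by
    have h := Finset.card_filter_add_card_filter_not
      (s := (Finset.univ : Finset (Fin n))) (p := fun i => β i = am)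
    rw [hcard] at h
    simp only [Finset.card_univ, Fintype.card_fin] at h
    omega
  obtain ⟨y, hy⟩ := Finset.card_eq_one.mp h1
  have hxy : x = y := by
    have : x ∈ ({y} : Finset (Fin n)) := by
      rw [← hy]; simp [hne]
    simpa using this
  have hall : ∀ i : Fin n, i ≠ x → β i = am := by
    intro i hi
    by_contra h
    have : i ∈ ({y} : Finset (Fin n)) := by rw [← hy]; simp [h]
    simp at this
    exact hi (this.trans hxy.symm)
  have hp : β ⟨(x:ℕ)-1, by omega⟩ = am := by
    apply hall
    intro h
    have := congrArg Fin.val h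
    simp at this; omega
  have hq : β ⟨(x:ℕ)+1, by omega⟩ = am := by
    apply hall
    intro h
    have := congrArg Fin.val h
    simp at this
  have h2 : β ⟨(x:ℕ)-1, by omega⟩ ≤ β x := hmono (by simp [Fin.le_def])
  have h3 : β x ≤ β ⟨(x:ℕ)+1, by omega⟩ := hmono (by simp [Fin.le_def])
  rw [hp] at h2; rw [hq] at h3
  exact hne (le_antisymm h3 h2)

/-- For an internal simplex (`0 < x` and `x < n-1` for all `x ∈ A`), the semiring
`DN¹_m` is commutative and the product of any two of its elements is the constant map `ā_m`;
in particular every element squares to `ā_m`, hence is `a_m`-nilpotent. -/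
theorem stmt4 (n : ℕ) (A : Set (Fin n)) (am : Fin n) (ham : am ∈ A)
    (hA : ∀ x ∈ A, 0 < (x : ℕ) ∧ (x : ℕ) < n - 1) :
    ∀ α ∈ DN1 n A am, ∀ β ∈ DN1 n A am,
      β ∘ α = α ∘ β ∧ β ∘ α = (fun _ => am) ∧ α ∘ α = (fun _ => am) := by
  intro α hα β hβ
  have hcomp : ∀ γ ∈ DN1 n A am, ∀ δ ∈ DN1 n A am, δ ∘ γ = (fun _ => am) := by
    intro γ hγ δ hδ
    funext i
    exact dn1_key n A am hA hδ (hγ.2.1 ⟨i, rfl⟩)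
  have h1 := hcomp α hα β hβ
  have h2 := hcomp β hβ α hα
  exact ⟨h1.trans h2.symm, h1, hcomp α hα α hα⟩
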